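/- Let n = 2m and let H_α be the Hermitian adjacency matrix of an oriented n-cycle with weights satisfying Σ_j α(j) = π. Then H_α has at most m distinct eigenvalues. -/

import Mathlib

open Polynomial Complex Matrix
open Fin.NatCast

/-- The Hermitian adjacency matrix of an oriented `n`-cycle. -/
noncomputable def cycleH (n : ℕ) (α : Fin n → ℝ) : Matrix (Fin n) (Fin n) ℂ :=
  fun j k =>
    (if (k : ℕ) = ((j : ℕ) + 1) % n then Complex.exp (Complex.I * (α j)) else 0) +
    (if (j : ℕ) = ((k : ℕ) + 1) % n then Complex.exp (-(Complex.I * (α k))) else 0)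

/-- The oriented shift matrix. -/
noncomputable def cycS (n : ℕ) (α : Fin n → ℝ) : Matrix (Fin n) (Fin n) ℂ :=
  fun j k => if (k : ℕ) = ((j : ℕ) + 1) % n then Complex.exp (Complex.I * (α j)) else 0

lemma cycS_apply (n : ℕ) [NeZero n] (α : Fin n → ℝ) (j k : Fin n) :
    cycS n α j k = if k = j + 1 then Complex.exp (Complex.I * (α j)) else 0 := by
  unfold cycS
  congr 1
  simp [Fin.ext_iff, Fin.add_def, Nat.add_mod]

/-- Vieta–Lucas polynomials: `vl k (t + t⁻¹) = t^k + t^(-k)`. -/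
noncomputable def vl : ℕ → Polynomial ℂ
  | 0 => 2
  | 1 => X
  | (k+2) => X * vl (k+1) - vl k

lemma aeval_vl {M : Type*} [Ring M] [Algebra ℂ M] (A B : M)
    (hAB : A * B = 1) (hBA : B * A = 1) (k : ℕ) :
    (aeval (A + B)) (vl k) = A ^ k + B ^ k := by
  have key : ∀ k : ℕ, (aeval (A + B)) (vl k) = A ^ k + B ^ k ∧
      (aeval (A + B)) (vl (k+1)) = A ^ (k+1) + B ^ (k+1) := by
    intro k
    induction k with
    | zero =>
      constructor
      · simp [vl, map_ofNat, one_add_one_eq_two]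
      · simp [vl]
    | succ k ih =>
      refine ⟨ih.2, ?_⟩
      show (aeval (A + B)) (vl (k+2)) = _
      rw [vl, map_sub, _root_.map_mul, aeval_X, ih.1, ih.2]
      have h1 : A * B ^ (k+1) = B ^ k := by
        rw [pow_succ' B k, ← mul_assoc, hAB, one_mul]
      have h2 : B * A ^ (k+1) = A ^ k := by
        rw [pow_succ' A k, ← mul_assoc, hBA, one_mul]
      have h3 : A * A ^ (k+1) = A ^ (k+2) := (pow_succ' A (k+1)).symm
      have h4 : B * B ^ (k+1) = B ^ (k+2) := (pow_succ' B (k+1)).symm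
      rw [add_mul, mul_add, mul_add, h1, h2, h3, h4]
      abel
  exact (key k).1

lemma vl_coeff (k : ℕ) : (vl k).natDegree ≤ k ∧ (vl k).coeff k = if k = 0 then 2 else 1 := by
  have key : ∀ k : ℕ,
      ((vl k).natDegree ≤ k ∧ (vl k).coeff k = if k = 0 then 2 else 1) ∧
      ((vl (k+1)).natDegree ≤ k+1 ∧ (vl (k+1)).coeff (k+1) = 1) := by
    intro k
    induction k with
    | zero =>
      refine ⟨⟨?_, ?_⟩, ?_, ?_⟩ <;> simp [vl]
    | succ k ih =>
      refine ⟨⟨ih.2.1, by simpa using ih.2.2⟩, ?_, ?_⟩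
      · show (X * vl (k+1) - vl k).natDegree ≤ k + 2
        refine le_trans (natDegree_sub_le _ _) ?_
        have h1 : (X * vl (k+1)).natDegree ≤ k + 2 := by
          refine le_trans (natDegree_mul_le) ?_
          rw [natDegree_X]
          have := ih.2.1
          omega
        have h2 : (vl k).natDegree ≤ k + 2 := le_trans ih.1.1 (by omega)
        omega
      · have e : vl (k+1+1) = X * vl (k+1) - vl k := rfl
        rw [e, coeff_sub, coeff_X_mul, ih.2.2,
          Polynomial.coeff_eq_zero_of_natDegree_lt
            (lt_of_le_of_lt ih.1.1 (show k < (k+1)+1 by omega))]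
        ring
  exact (key k).1

lemma vl_monic (k : ℕ) (hk : 1 ≤ k) : (vl k).Monic ∧ (vl k).natDegree = k := by
  obtain ⟨h1, h2⟩ := vl_coeff k
  rw [if_neg (by omega)] at h2
  have hm : (vl k).Monic := monic_of_natDegree_le_of_coeff_eq_one k h1 h2
  exact ⟨hm, le_antisymm h1 (le_natDegree_of_ne_zero (by rw [h2]; exact one_ne_zero))⟩

lemma cycS_pow (n : ℕ) [NeZero n] (α : Fin n → ℝ) (k : ℕ) (j l : Fin n) :
    ((cycS n α) ^ k) j l =
      if l = j + (k : Fin n) then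
        Complex.exp (Complex.I * (∑ t ∈ Finset.range k, (α (j + (t : Fin n)) : ℂ))) else 0 := by
  induction k generalizing l with
  | zero =>
    simp [Matrix.one_apply, eq_comm]
  | succ k ih =>
    rw [pow_succ, Matrix.mul_apply]
    have : ∀ c : Fin n, ((cycS n α) ^ k) j c * (cycS n α) c l =
        if c = j + (k : Fin n) then
          (if l = (j + (k : Fin n)) + 1 then
            Complex.exp (Complex.I * (∑ t ∈ Finset.range k, (α (j + (t : Fin n)) : ℂ))) *
            Complex.exp (Complex.I * (α (j + (k : Fin n)))) else 0)
        else 0 := by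
      intro c
      rw [ih, cycS_apply]
      by_cases hc : c = j + (k : Fin n) <;> simp [hc]
    rw [Finset.sum_congr rfl (fun c _ => this c), Finset.sum_ite_eq' Finset.univ]
    simp only [Finset.mem_univ, if_true]
    have hcast : ((k+1 : ℕ) : Fin n) = (k : Fin n) + 1 := by push_cast; ring
    rw [hcast, ← add_assoc]
    congr 1
    rw [Finset.sum_range_succ, ← Complex.exp_add, mul_add]

theorem oriented_even_cycle_few_eigenvalues (m : ℕ) (hm : 2 ≤ m)
    (α : Fin (2 * m) → ℝ) (hα : ∑ j, α j = Real.pi) :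
    (spectrum ℂ (cycleH (2 * m) α)).ncard ≤ m := by
  haveI : NeZero (2 * m) := ⟨by omega⟩
  -- star of the edge weights
  have hstar : ∀ r : ℝ, star (Complex.exp (Complex.I * r)) = Complex.exp (-(Complex.I * r)) := by
    intro r
    have h0 : star (Complex.exp (Complex.I * r)) = (starRingEnd ℂ) (Complex.exp (Complex.I * r)) :=
      rfl
    rw [h0, ← Complex.exp_conj]
    congr 1
    simp [Complex.conj_ofReal]
  -- H = S + Sᴴ
  have hH : cycleH (2 * m) α = cycS (2 * m) α + (cycS (2 * m) α)ᴴ := by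
    ext j k
    simp only [cycleH, Matrix.add_apply, Matrix.conjTranspose_apply, cycS]
    congr 1
    rw [apply_ite star, star_zero, hstar]
  -- S * Sᴴ = 1
  have hAB : cycS (2 * m) α * (cycS (2 * m) α)ᴴ = 1 := by
    ext j l
    rw [Matrix.mul_apply]
    have key : ∀ c : Fin (2 * m), cycS (2 * m) α j c * (cycS (2 * m) α)ᴴ c l =
        if c = j + 1 then
          (if l + 1 = j + 1 then
            Complex.exp (Complex.I * α j) * star (Complex.exp (Complex.I * α l))
           else 0)
        else 0 := by
      intro c
      rw [Matrix.conjTranspose_apply, cycS_apply, cycS_apply]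
      by_cases hc : c = j + 1
      · subst hc
        by_cases hl : j + 1 = l + 1 <;> simp [hl, eq_comm]
      · simp [hc]
    rw [Finset.sum_congr rfl (fun c _ => key c), Finset.sum_ite_eq' Finset.univ]
    simp only [Finset.mem_univ, if_true]
    by_cases hjl : j = l
    · subst hjl
      rw [if_pos rfl, hstar, ← Complex.exp_add, add_neg_cancel, Complex.exp_zero,
        Matrix.one_apply_eq]
    · rw [if_neg (by simpa using (Ne.symm hjl)), Matrix.one_apply_ne hjl]
  have hBA : (cycS (2 * m) α)ᴴ * cycS (2 * m) α = 1 := mul_eq_one_comm.mp hAB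
  -- S ^ n = -1
  have hSn : cycS (2 * m) α ^ (2 * m) = -1 := by
    ext j l
    rw [cycS_pow]
    have hsum : (∑ t ∈ Finset.range (2 * m), (α (j + (t : Fin (2 * m))) : ℂ)) = (Real.pi : ℂ) := by
      rw [← Fin.sum_univ_eq_sum_range (fun t => (α (j + (t : Fin (2 * m))) : ℂ))]
      simp only [Fin.cast_val_eq_self]
      rw [show (∑ i : Fin (2 * m), (α (j + i) : ℂ)) = ∑ i : Fin (2 * m), (α i : ℂ) from
        Fintype.sum_equiv (Equiv.addLeft j) _ _ (fun i => rfl)]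
      rw [← hα]
      norm_cast
    rw [hsum, Fin.natCast_self, add_zero, mul_comm Complex.I (Real.pi : ℂ), Complex.exp_pi_mul_I]
    rw [Matrix.neg_apply, Matrix.one_apply]
    by_cases hjl : l = j
    · subst hjl; simp
    · simp [hjl, Ne.symm hjl]
  -- (Sᴴ)^m = -(S^m)
  have hU : ∀ k : ℕ, (cycS (2 * m) α)ᴴ ^ k * cycS (2 * m) α ^ k = 1 := by
    intro k
    induction k with
    | zero => simp
    | succ k ih =>
      rw [pow_succ ((cycS (2 * m) α)ᴴ) k, pow_succ' (cycS (2 * m) α) k, mul_assoc,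
        ← mul_assoc ((cycS (2 * m) α)ᴴ) (cycS (2 * m) α) (cycS (2 * m) α ^ k), hBA, one_mul, ih]
  have hSm : cycS (2 * m) α ^ m * (-(cycS (2 * m) α ^ m)) = 1 := by
    rw [mul_neg, ← pow_add]
    have h2 : m + m = 2 * m := by omega
    rw [h2, hSn, neg_neg]
  have hBm : (cycS (2 * m) α)ᴴ ^ m = -(cycS (2 * m) α ^ m) := by
    calc (cycS (2 * m) α)ᴴ ^ m
        = (cycS (2 * m) α)ᴴ ^ m * (cycS (2 * m) α ^ m * (-(cycS (2 * m) α ^ m))) := by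
          rw [hSm, mul_one]
      _ = ((cycS (2 * m) α)ᴴ ^ m * cycS (2 * m) α ^ m) * (-(cycS (2 * m) α ^ m)) := by
          rw [mul_assoc]
      _ = -(cycS (2 * m) α ^ m) := by rw [hU m, one_mul]
  -- the minimal-type polynomial kills H
  have hp0 : (Polynomial.aeval (cycleH (2 * m) α)) (vl m) = 0 := by
    rw [hH, aeval_vl _ _ hAB hBA m, hBm, add_neg_cancel]
  obtain ⟨hmon, hdeg⟩ := vl_monic m (by omega)
  -- spectrum is contained in the roots of `vl m`
  have hsub : spectrum ℂ (cycleH (2 * m) α) ⊆ ((vl m).roots.toFinset : Set ℂ) := by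
    intro lam hlam
    have hmem : Polynomial.eval lam (vl m) ∈
        spectrum ℂ ((Polynomial.aeval (cycleH (2 * m) α)) (vl m)) :=
      spectrum.subset_polynomial_aeval (cycleH (2 * m) α) (vl m) ⟨lam, hlam, rfl⟩
    rw [hp0, spectrum.zero_eq] at hmem
    simp only [Set.mem_singleton_iff] at hmem
    simp only [Finset.coe_sort_coe, Multiset.mem_toFinset, Finset.mem_coe]
    rw [Polynomial.mem_roots (hmon.ne_zero)]
    exact hmem
  calc (spectrum ℂ (cycleH (2 * m) α)).ncard
      ≤ ((vl m).roots.toFinset : Set ℂ).ncard :=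
        Set.ncard_le_ncard hsub (Finset.finite_toSet _)
    _ = (vl m).roots.toFinset.card := Set.ncard_coe_finset _
    _ ≤ Multiset.card (vl m).roots := Multiset.toFinset_card_le _
    _ ≤ (vl m).natDegree := (vl m).card_roots'
    _ = m := hdeg
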